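/- Let F be a map on positive definite n×n matrices satisfying: (i) monotonicity (X ⪰ Y ⪰ 0 implies F(X) ⪰ F(Y)), and (ii) strict subhomogeneity (for all X ≻ 0 and α > 1, α·F(X) ≻ F(α·X) and F(α^{-1}X) ≻ α^{-1}F(X)). Then F has at most one positive definite fixed point. -/

import Mathlib

open Matrix

section Helpers

variable {n : ℕ}

private lemma herm_smul (c : ℝ) {A : Matrix (Fin n) (Fin n) ℝ} (h : A.IsHermitian) :
    (c • A).IsHermitian := by
  unfold Matrix.IsHermitian at *
  rw [conjTranspose_smul, star_trivial, h]

private lemma quad_nonneg {A : Matrix (Fin n) (Fin n) ℝ} (h : A.PosSemidef) (x : Fin n → ℝ) :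
    0 ≤ x ⬝ᵥ A *ᵥ x := by simpa using h.dotProduct_mulVec_nonneg x

private lemma quad_pos {A : Matrix (Fin n) (Fin n) ℝ} (h : A.PosDef) {x : Fin n → ℝ}
    (hx : x ≠ 0) : 0 < x ⬝ᵥ A *ᵥ x := by simpa using h.dotProduct_mulVec_pos hx

private lemma posSemidef_of_quad {A : Matrix (Fin n) (Fin n) ℝ} (hA : A.IsHermitian)
    (h : ∀ x, 0 ≤ x ⬝ᵥ A *ᵥ x) : A.PosSemidef :=
.of_dotProduct_mulVec_nonneg hA fun x => by simpa using h x

private lemma posDef_of_quad {A : Matrix (Fin n) (Fin n) ℝ} (hA : A.IsHermitian)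
    (h : ∀ x, x ≠ 0 → 0 < x ⬝ᵥ A *ᵥ x) : A.PosDef :=
.of_dotProduct_mulVec_pos hA fun x hx => by simpa using h x hx

private lemma quad_add (A B : Matrix (Fin n) (Fin n) ℝ) (x : Fin n → ℝ) :
    x ⬝ᵥ (A + B) *ᵥ x = x ⬝ᵥ A *ᵥ x + x ⬝ᵥ B *ᵥ x := by
  rw [add_mulVec, dotProduct_add]

private lemma quad_sub (A B : Matrix (Fin n) (Fin n) ℝ) (x : Fin n → ℝ) :
    x ⬝ᵥ (A - B) *ᵥ x = x ⬝ᵥ A *ᵥ x - x ⬝ᵥ B *ᵥ x := by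
  rw [sub_mulVec, dotProduct_sub]

private lemma quad_smul (c : ℝ) (A : Matrix (Fin n) (Fin n) ℝ) (x : Fin n → ℝ) :
    x ⬝ᵥ (c • A) *ᵥ x = c * (x ⬝ᵥ A *ᵥ x) := by
  rw [smul_mulVec, dotProduct_smul, smul_eq_mul]

private lemma psd_smul {A : Matrix (Fin n) (Fin n) ℝ} (hA : A.PosSemidef) {c : ℝ} (hc : 0 ≤ c) :
    (c • A).PosSemidef :=
  posSemidef_of_quad (herm_smul c hA.1) fun x => by
    rw [quad_smul]; exact mul_nonneg hc (quad_nonneg hA x)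

private lemma pd_smul {A : Matrix (Fin n) (Fin n) ℝ} (hA : A.PosDef) {c : ℝ} (hc : 0 < c) :
    (c • A).PosDef :=
  posDef_of_quad (herm_smul c hA.1) fun x hx => by
    rw [quad_smul]; exact mul_pos hc (quad_pos hA hx)

private lemma quad_continuous (A : Matrix (Fin n) (Fin n) ℝ) :
    Continuous fun x : Fin n → ℝ => x ⬝ᵥ A *ᵥ x := by
  simp only [dotProduct, Matrix.mulVec]
  exact continuous_finset_sum _ fun i _ =>
    (continuous_apply i).mul
      (continuous_finset_sum _ fun j _ => continuous_const.mul (continuous_apply j))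

/-- Key lemma: from a positive definite matrix one can subtract a small positive multiple of any
hermitian matrix and stay positive definite. -/
private lemma exists_delta {A B : Matrix (Fin n) (Fin n) ℝ} (hA : A.PosDef)
    (hB : B.IsHermitian) : ∃ δ : ℝ, 0 < δ ∧ (A - δ • B).PosDef := by
  rcases Nat.eq_zero_or_pos n with hn | hn
  · subst hn
    refine ⟨1, one_pos, posDef_of_quad (hA.1.sub (herm_smul 1 hB)) fun x hx => ?_⟩
    exact absurd (funext fun i => i.elim0) hx
  · haveI : Nonempty (Fin n) := ⟨⟨0, hn⟩⟩
    obtain ⟨u, hu, humin⟩ := (isCompact_sphere (0 : Fin n → ℝ) 1).exists_isMinOn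
      (NormedSpace.sphere_nonempty.mpr zero_le_one) (quad_continuous A).continuousOn
    obtain ⟨w, hw, hwmax⟩ := (isCompact_sphere (0 : Fin n → ℝ) 1).exists_isMaxOn
      (NormedSpace.sphere_nonempty.mpr zero_le_one) (quad_continuous B).abs.continuousOn
    have hu0 : u ≠ 0 := by
      intro h
      rw [mem_sphere_zero_iff_norm, h, norm_zero] at hu
      exact one_ne_zero hu.symm
    set m := u ⬝ᵥ A *ᵥ u with hmdef
    set M := |w ⬝ᵥ B *ᵥ w| with hMdef
    have hm : 0 < m := quad_pos hA hu0
    have hM0 : 0 ≤ M := abs_nonneg _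
    refine ⟨m / (M + 1), div_pos hm (by linarith),
      posDef_of_quad (hA.1.sub (herm_smul _ hB)) fun x hx => ?_⟩
    have hc : 0 < ‖x‖ := norm_pos_iff.mpr hx
    set c := ‖x‖ with hcdef
    set v := c⁻¹ • x with hvdef
    have hxv : x = c • v := by
      rw [hvdef, smul_smul, mul_inv_cancel₀ hc.ne', one_smul]
    have hvs : v ∈ Metric.sphere (0 : Fin n → ℝ) 1 := by
      rw [mem_sphere_zero_iff_norm, hvdef, norm_smul, norm_inv, norm_norm, ← hcdef,
        inv_mul_cancel₀ hc.ne']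
    have hscale : ∀ C : Matrix (Fin n) (Fin n) ℝ, x ⬝ᵥ C *ᵥ x = c ^ 2 * (v ⬝ᵥ C *ᵥ v) := by
      intro C
      conv_lhs => rw [hxv]
      rw [mulVec_smul, dotProduct_smul, smul_dotProduct, smul_eq_mul, smul_eq_mul]
      ring
    have h1 : m ≤ v ⬝ᵥ A *ᵥ v := humin hvs
    have h2 : |v ⬝ᵥ B *ᵥ v| ≤ M := hwmax hvs
    have h2' : v ⬝ᵥ B *ᵥ v ≤ M := (le_abs_self _).trans h2
    rw [quad_sub, quad_smul, hscale A, hscale B]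
    have hδM : m / (M + 1) * M < m := by
      rw [div_mul_eq_mul_div, div_lt_iff₀ (by linarith : (0:ℝ) < M + 1)]
      nlinarith
    have hc2 : 0 < c ^ 2 := by positivity
    have hpos : 0 < v ⬝ᵥ A *ᵥ v - m / (M + 1) * (v ⬝ᵥ B *ᵥ v) := by
      have hδ0 : 0 < m / (M + 1) := div_pos hm (by linarith)
      nlinarith
    nlinarith

private lemma nonneg_of_eps {v t : ℝ} (ht : 0 ≤ t)
    (h : ∀ ε : ℝ, 0 < ε → 0 ≤ v + ε * t) : 0 ≤ v := by
  by_contra hv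
  push_neg at hv
  rcases eq_or_lt_of_le ht with h0 | h0
  · nlinarith [h 1 one_pos]
  · have h1 := h (-v / (2 * t)) (div_pos (by linarith) (by linarith))
    have h2 : -v / (2 * t) * t = -v / 2 := by field_simp
    rw [h2] at h1
    linarith

private lemma psd_antisymm {A B : Matrix (Fin n) (Fin n) ℝ} (h1 : (A - B).PosSemidef)
    (h2 : (B - A).PosSemidef) : A = B := by
  set C := A - B with hC
  have hq : ∀ x, x ⬝ᵥ C *ᵥ x = 0 := by
    intro x
    refine le_antisymm ?_ (quad_nonneg h1 x)
    have hthis := quad_nonneg h2 x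
    have hBA : B - A = -C := by rw [hC, neg_sub]
    rw [hBA, neg_mulVec, dotProduct_neg] at hthis
    have := hthis
    linarith
  have hCt : Cᵀ = C := by
    ext i j
    have := congrFun (congrFun h1.1 i) j
    rw [conjTranspose_apply, star_trivial] at this
    simpa [transpose_apply] using this
  have hsym : ∀ x y : Fin n → ℝ, y ⬝ᵥ C *ᵥ x = x ⬝ᵥ C *ᵥ y := by
    intro x y
    rw [dotProduct_mulVec, ← mulVec_transpose, hCt, dotProduct_comm]
  have hbil : ∀ x y : Fin n → ℝ, x ⬝ᵥ C *ᵥ y = 0 := by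
    intro x y
    have hxy := hq (x + y)
    rw [mulVec_add, dotProduct_add, add_dotProduct, add_dotProduct] at hxy
    linarith [hq x, hq y, hsym x y]
  have hC0 : C = 0 := by
    ext i j
    have h := hbil (Pi.single i 1) (Pi.single j 1)
    rw [mulVec_single] at h
    rw [single_dotProduct] at h
    simpa using h
  rw [← sub_eq_zero, ← hC]
  exact hC0

end Helpers

/-- A monotone, strictly subhomogeneous map on positive definite matrices has at most one
positive definite fixed point. -/
theorem unique_posdef_fixed_point {n : ℕ}
    (F : Matrix (Fin n) (Fin n) ℝ → Matrix (Fin n) (Fin n) ℝ)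
    (hmono : ∀ X Y : Matrix (Fin n) (Fin n) ℝ,
      Y.PosSemidef → (X - Y).PosSemidef → (F X - F Y).PosSemidef)
    (hsub : ∀ (X : Matrix (Fin n) (Fin n) ℝ) (α : ℝ), X.PosDef → 1 < α →
      (α • F X - F (α • X)).PosDef ∧ (F (α⁻¹ • X) - α⁻¹ • F X).PosDef)
    (X Y : Matrix (Fin n) (Fin n) ℝ)
    (hX : X.PosDef) (hY : Y.PosDef) (hfX : F X = X) (hfY : F Y = Y) :
    X = Y := by
  have hXh := hX.1
  have hYh := hY.1
  set S : Set ℝ := {a | 1 ≤ a ∧ (a • X - Y).PosSemidef ∧ (Y - a⁻¹ • X).PosSemidef} with hSdef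
  have hinv_anti : ∀ a b : ℝ, 0 < a → a ≤ b → b⁻¹ ≤ a⁻¹ := by
    intro a b ha hab
    rw [inv_eq_one_div, inv_eq_one_div]
    exact one_div_le_one_div_of_le ha hab
  have hup : ∀ a b : ℝ, a ∈ S → a ≤ b → b ∈ S := by
    rintro a b ⟨ha1, haXY, haYX⟩ hab
    have hb1 : (1:ℝ) ≤ b := ha1.trans hab
    refine ⟨hb1, ?_, ?_⟩
    · have he : b • X - Y = (a • X - Y) + (b - a) • X := by module
      rw [he]
      exact haXY.add (psd_smul hX.posSemidef (by linarith))
    · have hba : b⁻¹ ≤ a⁻¹ := hinv_anti a b (by linarith) hab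
      have he : Y - b⁻¹ • X = (Y - a⁻¹ • X) + (a⁻¹ - b⁻¹) • X := by module
      rw [he]
      exact haYX.add (psd_smul hX.posSemidef (by linarith))
  -- S is nonempty
  obtain ⟨δ, hδ, hδpd⟩ := exists_delta hX hYh
  obtain ⟨ε, hε, hεpd⟩ := exists_delta hY hXh
  have hbase1 : (δ⁻¹ • X - Y).PosDef := by
    have h := pd_smul hδpd (inv_pos.mpr hδ)
    rwa [smul_sub, smul_smul, inv_mul_cancel₀ hδ.ne', one_smul] at h
  set a₀ : ℝ := max 1 (max δ⁻¹ ε⁻¹) with ha₀def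
  have ha₀1 : (1:ℝ) ≤ a₀ := le_max_left _ _
  have ha₀δ : δ⁻¹ ≤ a₀ := le_trans (le_max_left _ _) (le_max_right _ _)
  have ha₀ε : ε⁻¹ ≤ a₀ := le_trans (le_max_right _ _) (le_max_right _ _)
  have ha₀S : a₀ ∈ S := by
    refine ⟨ha₀1, ?_, ?_⟩
    · have he : a₀ • X - Y = (δ⁻¹ • X - Y) + (a₀ - δ⁻¹) • X := by module
      rw [he]
      exact hbase1.posSemidef.add (psd_smul hX.posSemidef (by linarith))
    · have hainv : a₀⁻¹ ≤ ε := by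
        have := hinv_anti ε⁻¹ a₀ (inv_pos.mpr hε) ha₀ε
        rwa [inv_inv] at this
      have he : Y - a₀⁻¹ • X = (Y - ε • X) + (ε - a₀⁻¹) • X := by module
      rw [he]
      exact hεpd.posSemidef.add (psd_smul hX.posSemidef (by linarith))
  have hne : S.Nonempty := ⟨a₀, ha₀S⟩
  have hbdd : BddBelow S := ⟨1, fun a ha => ha.1⟩
  set α : ℝ := sInf S with hαdef
  have hα1 : (1:ℝ) ≤ α := le_csInf hne fun a ha => ha.1
  have hαpos : (0:ℝ) < α := by linarith
  have hgt : ∀ β : ℝ, α < β → β ∈ S := by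
    intro β hβ
    obtain ⟨γ, hγS, hγ⟩ := exists_lt_of_csInf_lt hne hβ
    exact hup γ β hγS hγ.le
  -- α ∈ S
  have hαS : α ∈ S := by
    refine ⟨hα1, posSemidef_of_quad ((herm_smul α hXh).sub hYh) fun x => ?_,
      posSemidef_of_quad (hYh.sub (herm_smul α⁻¹ hXh)) fun x => ?_⟩
    · have ht : 0 ≤ x ⬝ᵥ X *ᵥ x := quad_nonneg hX.posSemidef x
      refine nonneg_of_eps ht fun e he => ?_
      have hmem := hgt (α + e) (by linarith)
      have h0 := quad_nonneg hmem.2.1 x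
      have heq : (α + e) • X - Y = (α • X - Y) + e • X := by module
      rw [heq, quad_add, quad_smul] at h0
      linarith
    · have ht : 0 ≤ x ⬝ᵥ X *ᵥ x := quad_nonneg hX.posSemidef x
      refine nonneg_of_eps ht fun e he => ?_
      have hmem := hgt (α + e) (by linarith)
      have h0 := quad_nonneg hmem.2.2 x
      have hαe : (0:ℝ) < α + e := by linarith
      have hcval : α⁻¹ - (α + e)⁻¹ = e / (α * (α + e)) := by
        field_simp
        ring
      have hc0 : 0 ≤ α⁻¹ - (α + e)⁻¹ := by
        rw [hcval]
        positivity
      have hce : α⁻¹ - (α + e)⁻¹ ≤ e := by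
        rw [hcval]
        exact div_le_self he.le (by nlinarith)
      have heq : Y - (α + e)⁻¹ • X = (Y - α⁻¹ • X) + (α⁻¹ - (α + e)⁻¹) • X := by module
      rw [heq, quad_add, quad_smul] at h0
      nlinarith
  rcases eq_or_lt_of_le hα1 with hα | hα
  · -- α = 1 : antisymmetry gives X = Y
    obtain ⟨-, h1, h2⟩ := hαS
    rw [← hα, one_smul] at h1
    rw [← hα, inv_one, one_smul] at h2
    exact psd_antisymm h1 h2
  · -- α > 1 : contradiction via strict subhomogeneity
    exfalso
    obtain ⟨-, hXYα, hYXα⟩ := hαS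
    obtain ⟨h1, h2⟩ := hsub X α hX hα
    rw [hfX] at h1 h2
    have h3 := hmono (α • X) Y hY.posSemidef hXYα
    rw [hfY] at h3
    have h4 := hmono Y (α⁻¹ • X) (psd_smul hX.posSemidef (by positivity)) hYXα
    rw [hfY] at h4
    have hPD1 : (α • X - Y).PosDef := by
      have he : α • X - Y = (α • X - F (α • X)) + (F (α • X) - Y) := by module
      rw [he]
      exact h1.add_posSemidef h3
    have hPD2 : (Y - α⁻¹ • X).PosDef := by
      have he : Y - α⁻¹ • X = (Y - F (α⁻¹ • X)) + (F (α⁻¹ • X) - α⁻¹ • X) := by module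
      rw [he]
      exact Matrix.PosDef.posSemidef_add h4 h2
    obtain ⟨d₁, hd₁, hpd1⟩ := exists_delta hPD1 hXh
    obtain ⟨d₂, hd₂, hpd2⟩ := exists_delta hPD2 hXh
    set d : ℝ := min d₁ d₂ with hddef
    have hd : 0 < d := lt_min hd₁ hd₂
    have hdd₁ : d ≤ d₁ := min_le_left _ _
    have hdd₂ : d ≤ d₂ := min_le_right _ _
    set β : ℝ := max 1 (α - d) with hβdef
    have hβα : β < α := max_lt hα (by linarith)
    have hβ1 : (1:ℝ) ≤ β := le_max_left _ _
    have hβd : α - β ≤ d := by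
      have h := le_max_right 1 (α - d)
      rw [← hβdef] at h
      linarith
    have hβpos : (0:ℝ) < β := by linarith
    have hβS : β ∈ S := by
      refine ⟨hβ1, ?_, ?_⟩
      · have he : β • X - Y = ((α • X - Y) - d₁ • X) + (d₁ - (α - β)) • X := by module
        rw [he]
        exact hpd1.posSemidef.add (psd_smul hX.posSemidef (by linarith))
      · have hinvv : β⁻¹ - α⁻¹ ≤ d₂ := by
          have h5 : β⁻¹ - α⁻¹ = (α - β) / (β * α) := by
            field_simp
          have h6 : (α - β) / (β * α) ≤ α - β :=
            div_le_self (by linarith) (by nlinarith)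
          linarith
        have he : Y - β⁻¹ • X = ((Y - α⁻¹ • X) - d₂ • X) + (d₂ - (β⁻¹ - α⁻¹)) • X := by
          module
        rw [he]
        exact hpd2.posSemidef.add (psd_smul hX.posSemidef (by linarith))
    exact absurd (csInf_le hbdd hβS) (not_le.mpr hβα)
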